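/- (Exponent-selection rule.) Let, for each n ≥ 2, scores z_{n,1},…,z_{n,n} be given with Λ_n < ∞ for all sufficiently large n, and suppose Λ_n ≍ (log n)^{ξ_Λ} and β_n ≍ (log n)^{ξ_β} for a positive deterministic sequence (β_n) and real exponents ξ_Λ, ξ_β. If ξ_β < ξ_Λ then D_n(β_n) → 0 (top-two collapse); if ξ_β > ξ_Λ then H_n(β_n) → 0 (entropy collapse). Consequently, if neither D_n(β_n) → 0 nor H_n(β_n) → 0 holds, then ξ_β = ξ_Λ. -/

import Mathlib

open Filter MeasureTheory
open scoped ENNReal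

/-- Maximum score `z_n^*`. -/
noncomputable def zmax (n : ℕ) (z : Fin n → ℝ) : ℝ := sSup (Set.range z)

/-- Gap `g_{n,j} = z_n^* - z_{n,j}`. -/
noncomputable def gap (n : ℕ) (z : Fin n → ℝ) (j : Fin n) : ℝ := zmax n z - z j

/-- Cumulative gap-counting function `N_n(t)`. -/
noncomputable def Ncount (n : ℕ) (z : Fin n → ℝ) (t : ℝ) : ℕ :=
  {j : Fin n | gap n z j ≤ t}.ncard

/-- Normalised partition function `Z_n(β)`. -/
noncomputable def Zfun (n : ℕ) (z : Fin n → ℝ) (β : ℝ) : ℝ :=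
  ∑ j : Fin n, Real.exp (-(β * gap n z j))

/-- Softmax probabilities `p_{n,j}(β)`. -/
noncomputable def softmaxP (n : ℕ) (z : Fin n → ℝ) (β : ℝ) (j : Fin n) : ℝ :=
  Real.exp (β * z j) / ∑ ℓ : Fin n, Real.exp (β * z ℓ)

/-- Shannon entropy `H_n(β)`. -/
noncomputable def entropyH (n : ℕ) (z : Fin n → ℝ) (β : ℝ) : ℝ :=
  -∑ j : Fin n, softmaxP n z β j * Real.log (softmaxP n z β j)

/-- The set of values `log N_n(t) / t` over `t > 0`, whose supremum is `Λ_n`. -/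
def lamSet (n : ℕ) (z : Fin n → ℝ) : Set ℝ :=
  {r | ∃ t : ℝ, 0 < t ∧ r = Real.log (Ncount n z t) / t}

/-- Second-largest entry of a finite vector (equals the largest in case of ties). -/
noncomputable def secondLargest (n : ℕ) (v : Fin n → ℝ) : ℝ :=
  sInf (Set.range fun i => sSup (v '' {j | j ≠ i}))

/-- Top-two weight gap `D_n(β)`. -/
noncomputable def Dgap (n : ℕ) (z : Fin n → ℝ) (β : ℝ) : ℝ :=
  sSup (Set.range (softmaxP n z β)) - secondLargest n (softmaxP n z β)

/-- Rank gap `G_n(β) = max_{i,j} |p_{n,i}(β) - p_{n,j}(β)|`. -/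
noncomputable def Ggap (n : ℕ) (z : Fin n → ℝ) (β : ℝ) : ℝ :=
  sSup {x | ∃ i j : Fin n, x = |softmaxP n z β i - softmaxP n z β j|}

/-- Resolved accumulation scale `Λ_n^{(r)}` (with `sup ∅ = 0`), valued in `ℝ≥0∞`. -/
noncomputable def resolvedLam (n : ℕ) (z : Fin n → ℝ) (r : ℝ) : ℝ≥0∞ :=
  ⨆ t ∈ {t : ℝ | 0 < t ∧ r < Real.log (Ncount n z t)},
    ENNReal.ofReal ((Real.log (Ncount n z t) - r) / t)

/-- Laplace envelope `S_n(β) = sup_{t ≥ 0} (log N_n(t) - β t)`. -/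
noncomputable def Sfun (n : ℕ) (z : Fin n → ℝ) (β : ℝ) : ℝ :=
  sSup {x | ∃ t : ℝ, 0 ≤ t ∧ x = Real.log (Ncount n z t) - β * t}

/-- Rank boundary `B_n^rank(r) = sup {β ≥ 0 : log Z_n(β) ≥ r}`, valued in `ℝ≥0∞`. -/
noncomputable def rankBoundary (n : ℕ) (z : Fin n → ℝ) (r : ℝ) : ℝ≥0∞ :=
  ⨆ β ∈ {β : ℝ | 0 ≤ β ∧ r ≤ Real.log (Zfun n z β)}, ENNReal.ofReal β

/-- `X_n ≍ (log n)^ξ`. -/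
def IsLogAsymp (X : ℕ → ℝ) (ξ : ℝ) : Prop :=
  ∃ c₁ c₂ : ℝ, 0 < c₁ ∧ c₁ ≤ c₂ ∧
    ∀ᶠ n : ℕ in Filter.atTop,
      c₁ * Real.log n ^ ξ ≤ X n ∧ X n ≤ c₂ * Real.log n ^ ξ

lemma aux_xexp {x : ℝ} (hx : 0 ≤ x) : x * Real.exp (-(x/2)) ≤ 1 := by
  have h1 : (1 : ℝ) + x/4 ≤ Real.exp (x/4) := by
    have := Real.add_one_le_exp (x/4); linarith
  have h2 : Real.exp (x/2) = Real.exp (x/4) * Real.exp (x/4) := by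
    rw [← Real.exp_add]; ring_nf
  have h3 : x ≤ Real.exp (x/2) := by
    nlinarith [Real.exp_pos (x/4), sq_nonneg (x - 4)]
  rw [Real.exp_neg, ← div_eq_mul_inv, div_le_one (Real.exp_pos _)]
  exact h3

section basic
variable {n : ℕ} {z : Fin n → ℝ}

lemma z_le_zmax (j : Fin n) : z j ≤ zmax n z :=
  le_csSup (Set.finite_range z).bddAbove ⟨j, rfl⟩

lemma gap_nonneg (j : Fin n) : 0 ≤ gap n z j := sub_nonneg.2 (z_le_zmax j)

lemma exists_gap_zero (hn : 0 < n) : ∃ j, gap n z j = 0 := by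
  have : Nonempty (Fin n) := ⟨⟨0, hn⟩⟩
  obtain ⟨j, hj⟩ := (Set.range_nonempty z).csSup_mem (Set.finite_range z)
  exact ⟨j, by simp [gap, zmax, hj]⟩

lemma Ncount_mono {s t : ℝ} (h : s ≤ t) : Ncount n z s ≤ Ncount n z t :=
  Set.ncard_le_ncard (fun j hj => le_trans hj h) (Set.toFinite _)

lemma Ncount_le_n (t : ℝ) : Ncount n z t ≤ n := by
  have := Set.ncard_le_ncard (Set.subset_univ {j : Fin n | gap n z j ≤ t}) (Set.toFinite _)
  simpa [Ncount, Set.ncard_univ] using this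

lemma one_le_Ncount (hn : 0 < n) {t : ℝ} (ht : 0 ≤ t) : 1 ≤ Ncount n z t := by
  obtain ⟨j, hj⟩ := exists_gap_zero (z := z) hn
  have : ({j} : Set (Fin n)) ⊆ {j : Fin n | gap n z j ≤ t} := by
    intro x hx; rcases hx with rfl; simp [hj, ht]
  simpa [Ncount] using Set.ncard_le_ncard this (Set.toFinite _)

lemma Zfun_pos (hn : 0 < n) (β : ℝ) : 0 < Zfun n z β := by
  have : Nonempty (Fin n) := ⟨⟨0, hn⟩⟩
  exact Finset.sum_pos (fun j _ => Real.exp_pos _) Finset.univ_nonempty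

lemma one_le_Zfun (hn : 0 < n) {β : ℝ} (hβ : 0 ≤ β) : 1 ≤ Zfun n z β := by
  obtain ⟨j, hj⟩ := exists_gap_zero (z := z) hn
  have h1 : Real.exp (-(β * gap n z j)) = 1 := by simp [hj]
  calc (1:ℝ) = Real.exp (-(β * gap n z j)) := h1.symm
    _ ≤ Zfun n z β :=
      Finset.single_le_sum (f := fun i => Real.exp (-(β * gap n z i)))
        (fun i _ => (Real.exp_pos _).le) (Finset.mem_univ j)

lemma Zfun_ge_count {β t : ℝ} (hβ : 0 ≤ β) (ht : 0 ≤ t) :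
    (Ncount n z t : ℝ) * Real.exp (-(β * t)) ≤ Zfun n z β := by
  classical
  have h1 : (Ncount n z t : ℝ) * Real.exp (-(β * t)) ≤
      ∑ j ∈ {j : Fin n | gap n z j ≤ t}.toFinset, Real.exp (-(β * gap n z j)) := by
    rw [Ncount, Set.ncard_eq_toFinset_card']
    have := Finset.card_nsmul_le_sum {j : Fin n | gap n z j ≤ t}.toFinset
      (fun j => Real.exp (-(β * gap n z j))) (Real.exp (-(β * t)))
      (fun j hj => Real.exp_le_exp.2 (by
        have hjt : gap n z j ≤ t := by simpa using hj
        nlinarith))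
    rwa [nsmul_eq_mul] at this
  refine h1.trans (Finset.sum_le_sum_of_subset_of_nonneg (Finset.subset_univ _) ?_)
  intro j _ _; exact (Real.exp_pos _).le
end basic

section lam
variable {n : ℕ} {z : Fin n → ℝ} {Λ : ℝ}

lemma Ncount_le_exp (hn : 0 < n) (hΛ0 : 0 < Λ) (hlub : IsLUB (lamSet n z) Λ)
    {t : ℝ} (ht : 0 ≤ t) : (Ncount n z t : ℝ) ≤ Real.exp (Λ * t) := by
  have key : ∀ s : ℝ, 0 < s → (Ncount n z s : ℝ) ≤ Real.exp (Λ * s) := by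
    intro s hs
    have hle : Real.log (Ncount n z s) / s ≤ Λ := hlub.1 ⟨s, hs, rfl⟩
    have hlog : Real.log (Ncount n z s) ≤ Λ * s := by
      rw [div_le_iff₀ hs] at hle; linarith
    rcases Nat.eq_zero_or_pos (Ncount n z s) with h0 | hpos
    · rw [h0]; simpa using (Real.exp_pos (Λ * s)).le
    · have hNpos : (0:ℝ) < (Ncount n z s : ℝ) := by exact_mod_cast hpos
      calc (Ncount n z s : ℝ) = Real.exp (Real.log (Ncount n z s)) := (Real.exp_log hNpos).symm
        _ ≤ Real.exp (Λ * s) := Real.exp_le_exp.2 hlog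
  rcases eq_or_lt_of_le ht with rfl | htpos
  · -- t = 0 : show Ncount 0 ≤ 1 = exp 0
    have h1 : Ncount n z 0 ≤ 1 := by
      by_contra h
      push_neg at h
      have h2 : (2:ℝ) ≤ (Ncount n z 0 : ℝ) := by exact_mod_cast h
      set s : ℝ := Real.log 2 / (2 * Λ) with hs
      have hspos : 0 < s := by
        apply div_pos (Real.log_pos (by norm_num)) (by linarith)
      have hmono : (Ncount n z 0 : ℝ) ≤ (Ncount n z s : ℝ) := by
        exact_mod_cast Ncount_mono hspos.le
      have hb := key s hspos
      have : Λ * s = Real.log 2 / 2 := by rw [hs, mul_div_assoc', mul_comm 2 Λ, mul_div_mul_left _ _ hΛ0.ne']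
      rw [this] at hb
      have hexp : Real.exp (Real.log 2 / 2) < 2 := by
        have h4 : Real.exp (Real.log 2 / 2) ^ 2 = 2 := by
          rw [← Real.exp_nat_mul]
          have : (2:ℕ) * (Real.log 2 / 2) = Real.log 2 := by push_cast; ring
          rw [this, Real.exp_log (by norm_num : (0:ℝ) < 2)]
        nlinarith [Real.exp_pos (Real.log 2 / 2)]
      linarith
    calc (Ncount n z (0:ℝ) : ℝ) ≤ 1 := by exact_mod_cast h1
      _ ≤ Real.exp (Λ * 0) := by simp
  · exact key t htpos

/-- Sorted gaps: the `k`-th smallest gap `g(σ k)` has `Ncount (g (σ k)) ≥ k+1`. -/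
lemma sorted_count (k : Fin n) :
    (k : ℕ) + 1 ≤ Ncount n z (gap n z (Tuple.sort (gap n z) k)) := by
  classical
  set σ := Tuple.sort (gap n z) with hσ
  set t := gap n z (σ k) with htdef
  have hsub : (Finset.Iic k).image σ ⊆ {j : Fin n | gap n z j ≤ t}.toFinset := by
    intro j hj
    rcases Finset.mem_image.1 hj with ⟨i, hi, rfl⟩
    have : gap n z (σ i) ≤ gap n z (σ k) :=
      Tuple.monotone_sort (gap n z) (Finset.mem_Iic.1 hi)
    simpa using this
  have hcard : ((Finset.Iic k).image σ).card = (k : ℕ) + 1 := by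
    rw [Finset.card_image_of_injective _ σ.injective]
    simp
  rw [Ncount, Set.ncard_eq_toFinset_card']
  rw [← hcard]
  exact Finset.card_le_card hsub

lemma log_le_gap_sorted (hn : 0 < n) (hΛ0 : 0 < Λ) (hlub : IsLUB (lamSet n z) Λ) (k : Fin n) :
    Real.log ((k : ℕ) + 1) ≤ Λ * gap n z (Tuple.sort (gap n z) k) := by
  have h1 : ((k : ℕ) + 1 : ℝ) ≤ (Ncount n z (gap n z (Tuple.sort (gap n z) k)) : ℝ) := by
    exact_mod_cast sorted_count k
  have h2 := Ncount_le_exp hn hΛ0 hlub (gap_nonneg (z := z) (Tuple.sort (gap n z) k))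
  have h3 : ((k:ℕ) + 1 : ℝ) ≤ Real.exp (Λ * gap n z (Tuple.sort (gap n z) k)) := h1.trans h2
  calc Real.log ((k:ℕ) + 1) ≤ Real.log (Real.exp (Λ * gap n z (Tuple.sort (gap n z) k))) :=
      Real.log_le_log (by positivity) h3
    _ = _ := Real.log_exp _

lemma gap_sort_zero (hn : 0 < n) : gap n z (Tuple.sort (gap n z) ⟨0, hn⟩) = 0 := by
  obtain ⟨j0, hj0⟩ := exists_gap_zero (z := z) hn
  have h1 : gap n z (Tuple.sort (gap n z) ⟨0, hn⟩)
      ≤ gap n z (Tuple.sort (gap n z) ((Tuple.sort (gap n z)).symm j0)) := by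
    apply Tuple.monotone_sort (gap n z)
    exact Fin.mk_le_of_le_val (Nat.zero_le _)
  rw [Equiv.apply_symm_apply, hj0] at h1
  exact le_antisymm h1 (gap_nonneg _)
end lam

section series

lemma tail_sum {s : ℝ} (hs : 2 ≤ s) (m : ℕ) :
    ∑ k ∈ Finset.range m, ((k : ℝ) + 2) ^ (-s) ≤ 2 ^ (2 - s) * (1 - 1/(m+1)) := by
  induction m with
  | zero => simp
  | succ m ih =>
    rw [Finset.sum_range_succ]
    have key : ((m : ℝ) + 2) ^ (-s) ≤ 2 ^ (2 - s) * (1/(m+1) - 1/(m+2)) := by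
      have hm2 : (0:ℝ) < (m:ℝ) + 2 := by positivity
      have h1 : ((m : ℝ) + 2) ^ (-s) = ((m:ℝ)+2) ^ (-(s-2)) * ((m:ℝ)+2) ^ (-(2:ℝ)) := by
        rw [← Real.rpow_add hm2]; ring_nf
      have h2 : ((m:ℝ)+2) ^ (-(2:ℝ)) = 1 / (((m:ℝ)+2)^(2:ℕ)) := by
        rw [Real.rpow_neg hm2.le, ← Real.rpow_natCast ((m:ℝ)+2) 2]
        push_cast
        rw [one_div]
      have h3 : ((m:ℝ)+2) ^ (-(s-2)) ≤ 2 ^ (-(s-2)) := by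
        rw [Real.rpow_neg hm2.le, Real.rpow_neg (by norm_num : (0:ℝ) ≤ 2)]
        have : (2:ℝ) ^ (s-2) ≤ ((m:ℝ)+2) ^ (s-2) :=
          Real.rpow_le_rpow (by norm_num) (by push_cast; linarith [Nat.cast_nonneg (α := ℝ) m]) (by linarith)
        exact inv_anti₀ (Real.rpow_pos_of_pos (by norm_num) _) this
      have h4 : 1 / (((m:ℝ)+2)^(2:ℕ)) ≤ 1/(m+1) - 1/(m+2) := by
        have hm1 : (0:ℝ) < (m:ℝ) + 1 := by positivity
        rw [div_sub_div _ _ (ne_of_gt hm1) (ne_of_gt hm2)]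
        rw [div_le_div_iff₀ (by positivity) (by positivity)]
        ring_nf
        nlinarith [Nat.cast_nonneg (α := ℝ) m]
      have h5 : (2:ℝ) ^ (-(s-2)) = 2 ^ (2 - s) := by ring_nf
      calc ((m : ℝ) + 2) ^ (-s) = ((m:ℝ)+2) ^ (-(s-2)) * ((m:ℝ)+2) ^ (-(2:ℝ)) := h1
        _ ≤ 2 ^ (2-s) * (1/(m+1) - 1/(m+2)) := by
            rw [h2]
            apply mul_le_mul (h5 ▸ h3) h4 (by positivity) (by positivity)
    have hgoal : 2 ^ (2-s) * (1 - 1/(m+1)) + 2 ^ (2-s) * (1/(m+1) - 1/(m+2))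
        = 2 ^ (2-s) * (1 - 1/((m:ℝ)+1+1)) := by push_cast; ring
    push_cast
    push_cast at ih key
    linarith

lemma tail_sum' {s : ℝ} (hs : 2 ≤ s) (m : ℕ) :
    ∑ k ∈ Finset.range m, ((k : ℝ) + 2) ^ (-s) ≤ 2 ^ (2 - s) := by
  refine (tail_sum hs m).trans ?_
  have h1 : (0:ℝ) < 2 ^ (2 - s) := Real.rpow_pos_of_pos (by norm_num) _
  have h2 : 1 - 1/((m:ℝ)+1) ≤ 1 := by
    have : (0:ℝ) < (m:ℝ)+1 := by positivity
    have := one_div_pos.mpr this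
    linarith
  nlinarith

end series

section bounds
variable {n : ℕ} {z : Fin n → ℝ} {Λ b β : ℝ}

lemma exp_gap_le (hn : 0 < n) (hb : 0 < b) (hΛ0 : 0 < Λ) (hlub : IsLUB (lamSet n z) Λ)
    (k : Fin n) :
    Real.exp (-(b * gap n z (Tuple.sort (gap n z) k))) ≤ (((k:ℕ) : ℝ) + 1) ^ (-(b/Λ)) := by
  have hl := log_le_gap_sorted hn hΛ0 hlub k
  set g := gap n z (Tuple.sort (gap n z) k) with hg
  have hq : (b/Λ) * Real.log ((k:ℕ) + 1) ≤ b * g := by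
    have := mul_le_mul_of_nonneg_left hl (le_of_lt (div_pos hb hΛ0))
    calc (b/Λ) * Real.log ((k:ℕ) + 1) ≤ (b/Λ) * (Λ * g) := this
      _ = b * g := by field_simp
  have : Real.exp (-(b * g)) ≤ Real.exp (-((b/Λ) * Real.log ((k:ℕ) + 1))) :=
    Real.exp_le_exp.2 (by linarith)
  refine this.trans ?_
  rw [Real.rpow_def_of_pos (by positivity)]
  apply le_of_eq
  congr 1
  ring

lemma Zfun_le (hn : 0 < n) (hβ : 0 < β) (hΛ0 : 0 < Λ) (hlub : IsLUB (lamSet n z) Λ)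
    (hq : 2 ≤ β/Λ) : Zfun n z β ≤ 1 + 2 ^ (2 - β/Λ) := by
  obtain ⟨m, rfl⟩ : ∃ m, n = m + 1 := ⟨n - 1, (Nat.succ_pred_eq_of_pos hn).symm⟩
  set σ := Tuple.sort (gap (m+1) z) with hσ
  have h1 : Zfun (m+1) z β = ∑ k : Fin (m+1), Real.exp (-(β * gap (m+1) z (σ k))) := by
    rw [Zfun]
    exact (Equiv.sum_comp σ (fun j => Real.exp (-(β * gap (m+1) z j)))).symm
  rw [h1, Fin.sum_univ_succ]
  have h0 : Real.exp (-(β * gap (m+1) z (σ 0))) = 1 := by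
    have := gap_sort_zero (z := z) (Nat.succ_pos m)
    have h00 : (⟨0, Nat.succ_pos m⟩ : Fin (m+1)) = 0 := rfl
    rw [h00] at this
    rw [this]; simp
  rw [h0]
  have h2 : ∑ i : Fin m, Real.exp (-(β * gap (m+1) z (σ i.succ)))
      ≤ ∑ i : Fin m, ((i : ℕ) + 1 + 1 : ℝ) ^ (-(β/Λ)) := by
    apply Finset.sum_le_sum
    intro i _
    have := exp_gap_le hn hβ hΛ0 hlub i.succ
    simpa [Fin.val_succ, add_comm, add_assoc, add_left_comm] using this
  have h3 : ∑ i : Fin m, ((i : ℕ) + 1 + 1 : ℝ) ^ (-(β/Λ))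
      = ∑ k ∈ Finset.range m, ((k : ℝ) + 2) ^ (-(β/Λ)) := by
    rw [← Fin.sum_univ_eq_sum_range (fun k => ((k : ℝ) + 2) ^ (-(β/Λ))) m]
    apply Finset.sum_congr rfl
    intro i _
    congr 1
    ring
  have h4 := tail_sum' hq m
  linarith [h2.trans (le_of_eq h3) |>.trans h4]

lemma weighted_le (hn : 0 < n) (hβ : 0 < β) (hΛ0 : 0 < Λ) (hlub : IsLUB (lamSet n z) Λ)
    (hq : 2 ≤ (β/2)/Λ) :
    ∑ j : Fin n, (β * gap n z j) * Real.exp (-(β * gap n z j)) ≤ 2 ^ (2 - (β/2)/Λ) := by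
  obtain ⟨m, rfl⟩ : ∃ m, n = m + 1 := ⟨n - 1, (Nat.succ_pred_eq_of_pos hn).symm⟩
  set σ := Tuple.sort (gap (m+1) z) with hσ
  have h1 : ∑ j : Fin (m+1), (β * gap (m+1) z j) * Real.exp (-(β * gap (m+1) z j))
      = ∑ k : Fin (m+1), (β * gap (m+1) z (σ k)) * Real.exp (-(β * gap (m+1) z (σ k))) :=
    (Equiv.sum_comp σ (fun j => (β * gap (m+1) z j) * Real.exp (-(β * gap (m+1) z j)))).symm
  rw [h1, Fin.sum_univ_succ]
  have h0 : gap (m+1) z (σ 0) = 0 := gap_sort_zero (Nat.succ_pos m)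
  rw [h0]
  simp only [mul_zero, zero_mul, zero_add, neg_zero, Real.exp_zero, mul_one]
  have h2 : ∀ i : Fin m, (β * gap (m+1) z (σ i.succ)) * Real.exp (-(β * gap (m+1) z (σ i.succ)))
      ≤ ((i : ℕ) + 1 + 1 : ℝ) ^ (-((β/2)/Λ)) := by
    intro i
    set g := gap (m+1) z (σ i.succ) with hg
    have hg0 : 0 ≤ g := gap_nonneg _
    have ha : (β * g) * Real.exp (-(β * g)) ≤ Real.exp (-((β/2) * g)) := by
      have hx : 0 ≤ β * g := by positivity
      have := aux_xexp hx
      have hsplit : Real.exp (-(β * g)) = Real.exp (-(β * g / 2)) * Real.exp (-(β * g / 2)) := by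
        rw [← Real.exp_add]; ring_nf
      calc (β * g) * Real.exp (-(β * g))
          = ((β * g) * Real.exp (-(β * g / 2))) * Real.exp (-(β * g / 2)) := by
            rw [hsplit]; ring
        _ ≤ 1 * Real.exp (-(β * g / 2)) := by
            apply mul_le_mul_of_nonneg_right this (Real.exp_pos _).le
        _ = Real.exp (-((β/2) * g)) := by rw [one_mul]; ring_nf
    have hb := exp_gap_le hn (by positivity : (0:ℝ) < β/2) hΛ0 hlub i.succ
    rw [← hg] at hb
    refine ha.trans ?_
    simpa [Fin.val_succ, add_comm, add_assoc, add_left_comm] using hb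
  have h3 : ∑ i : Fin m, (β * gap (m+1) z (σ i.succ)) * Real.exp (-(β * gap (m+1) z (σ i.succ)))
      ≤ ∑ k ∈ Finset.range m, ((k : ℝ) + 2) ^ (-((β/2)/Λ)) := by
    rw [← Fin.sum_univ_eq_sum_range (fun k => ((k : ℝ) + 2) ^ (-((β/2)/Λ))) m]
    apply Finset.sum_le_sum
    intro i _
    refine (h2 i).trans (le_of_eq ?_)
    congr 1
    ring
  have h4 := tail_sum' hq m
  linarith [h3.trans h4]
end bounds


section softmax
variable {n : ℕ} {z : Fin n → ℝ} {Λ β : ℝ}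

lemma sum_exp_pos (hn : 0 < n) (β : ℝ) : 0 < ∑ ℓ : Fin n, Real.exp (β * z ℓ) := by
  have : Nonempty (Fin n) := ⟨⟨0, hn⟩⟩
  exact Finset.sum_pos (fun j _ => Real.exp_pos _) Finset.univ_nonempty

lemma Zfun_eq (β : ℝ) :
    Zfun n z β = Real.exp (-(β * zmax n z)) * ∑ ℓ : Fin n, Real.exp (β * z ℓ) := by
  rw [Zfun, Finset.mul_sum]
  apply Finset.sum_congr rfl
  intro ℓ _
  rw [← Real.exp_add]
  congr 1
  rw [gap]
  ring

lemma softmax_eq (j : Fin n) :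
    softmaxP n z β j = Real.exp (-(β * gap n z j)) / Zfun n z β := by
  rw [softmaxP, Zfun_eq]
  have h1 : Real.exp (-(β * gap n z j)) = Real.exp (-(β * zmax n z)) * Real.exp (β * z j) := by
    rw [← Real.exp_add]; congr 1; rw [gap]; ring
  rw [h1, mul_div_mul_left _ _ (Real.exp_ne_zero _)]

lemma softmax_nonneg (j : Fin n) : 0 ≤ softmaxP n z β j := by
  rcases Nat.eq_zero_or_pos n with h | hn
  · exact absurd j.2 (by omega)
  · exact div_nonneg (Real.exp_pos _).le (sum_exp_pos hn β).le

lemma softmax_le_one (j : Fin n) : softmaxP n z β j ≤ 1 := by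
  rcases Nat.eq_zero_or_pos n with h | hn
  · exact absurd j.2 (by omega)
  · rw [softmaxP, div_le_one (sum_exp_pos hn β)]
    exact Finset.single_le_sum (f := fun ℓ => Real.exp (β * z ℓ))
      (fun i _ => (Real.exp_pos _).le) (Finset.mem_univ j)

lemma entropy_nonneg : 0 ≤ entropyH n z β := by
  rw [entropyH, neg_nonneg]
  apply Finset.sum_nonpos
  intro j _
  rcases eq_or_lt_of_le (softmax_nonneg (β := β) (z := z) j) with h | h
  · rw [← h]; simp
  · exact mul_nonpos_of_nonneg_of_nonpos h.le (Real.log_nonpos h.le (softmax_le_one j))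

lemma entropy_le (hn : 0 < n) (hβ : 0 < β) (hΛ0 : 0 < Λ) (hlub : IsLUB (lamSet n z) Λ)
    (hq4 : 4 ≤ β/Λ) :
    entropyH n z β ≤ 2 ^ (2 - (β/2)/Λ) + 2 ^ (2 - β/Λ) := by
  set Z := Zfun n z β with hZdef
  have hZpos : 0 < Z := Zfun_pos hn β
  have hZ1 : 1 ≤ Z := one_le_Zfun hn hβ.le
  have hterm : ∀ j, softmaxP n z β j * Real.log (softmaxP n z β j)
      = (Real.exp (-(β * gap n z j)) * (-(β * gap n z j))
          - Real.exp (-(β * gap n z j)) * Real.log Z) / Z := by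
    intro j
    rw [softmax_eq, Real.log_div (Real.exp_ne_zero _) (ne_of_gt hZpos), Real.log_exp]
    ring
  have hH : entropyH n z β
      = (∑ j : Fin n, (β * gap n z j) * Real.exp (-(β * gap n z j))) / Z + Real.log Z := by
    rw [entropyH, Finset.sum_congr rfl (fun j _ => hterm j), ← Finset.sum_div,
      Finset.sum_sub_distrib, ← Finset.sum_mul]
    have hsum : ∑ j : Fin n, Real.exp (-(β * gap n z j)) = Z := rfl
    rw [hsum]
    field_simp
    ring_nf
    rw [Finset.sum_neg_distrib]; ring
  have hw := weighted_le hn hβ hΛ0 hlub (by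
    have : (β/2)/Λ = (β/Λ)/2 := by ring
    rw [this]; linarith)
  have hz := Zfun_le hn hβ hΛ0 hlub (by linarith)
  have hwnonneg : 0 ≤ ∑ j : Fin n, (β * gap n z j) * Real.exp (-(β * gap n z j)) := by
    apply Finset.sum_nonneg
    intro j _
    have := gap_nonneg (z := z) j
    positivity
  have h1 : (∑ j : Fin n, (β * gap n z j) * Real.exp (-(β * gap n z j))) / Z
      ≤ ∑ j : Fin n, (β * gap n z j) * Real.exp (-(β * gap n z j)) :=
    div_le_self hwnonneg hZ1
  have h2 : Real.log Z ≤ 2 ^ (2 - β/Λ) := by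
    have := Real.log_le_sub_one_of_pos hZpos
    linarith
  rw [hH]
  have := h1.trans hw
  linarith
end softmax

section dgap
variable {n : ℕ} {z : Fin n → ℝ} {Λ β : ℝ}

lemma exists_ne_fin (hn : 2 ≤ n) (i : Fin n) : ∃ j : Fin n, j ≠ i := by
  have h0 : (0:ℕ) < n := by omega
  have h1 : (1:ℕ) < n := by omega
  by_cases h : i = ⟨0, h0⟩
  · exact ⟨⟨1, h1⟩, by rw [h]; intro hc; exact absurd (Fin.mk.injEq .. ▸ hc) (by simp)⟩
  · exact ⟨⟨0, h0⟩, fun hc => h hc.symm⟩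

lemma secondLargest_le_sup (hn : 2 ≤ n) (v : Fin n → ℝ) :
    secondLargest n v ≤ sSup (Set.range v) := by
  have hn0 : 0 < n := by omega
  have i0 : Fin n := ⟨0, hn0⟩
  have h1 : secondLargest n v ≤ sSup (v '' {j | j ≠ i0}) :=
    csInf_le (Set.finite_range _).bddBelow ⟨i0, rfl⟩
  refine h1.trans ?_
  apply csSup_le_csSup (Set.finite_range v).bddAbove
  · obtain ⟨j, hj⟩ := exists_ne_fin hn i0
    exact ⟨v j, j, hj, rfl⟩
  · exact Set.image_subset_range v _

lemma Dgap_nonneg (hn : 2 ≤ n) : 0 ≤ Dgap n z β :=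
  sub_nonneg.2 (secondLargest_le_sup hn _)

lemma Dgap_le_main (hn : 2 ≤ n) (hβ : 0 < β) (hΛ0 : 0 < Λ) (hlub : IsLUB (lamSet n z) Λ)
    (hr : β/Λ ≤ 1/4) : Dgap n z β ≤ 2 * (β/Λ) := by
  have hn0 : 0 < n := by omega
  have : Nonempty (Fin n) := ⟨⟨0, hn0⟩⟩
  obtain ⟨c, ⟨t, ht, rfl⟩, hc⟩ := (lt_isLUB_iff hlub).1 (half_lt_self hΛ0)
  set L := Real.log (Ncount n z t) with hLdef
  have hL : Λ/2 * t < L := (lt_div_iff₀ ht).1 hc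
  have hLpos : 0 < L := lt_of_le_of_lt (by positivity) hL
  have hN2 : 2 ≤ Ncount n z t := by
    by_contra h
    push_neg at h
    have h1 : (Ncount n z t : ℝ) ≤ 1 := by exact_mod_cast Nat.lt_succ_iff.1 h
    have := Real.log_nonpos (Nat.cast_nonneg _) h1
    linarith
  obtain ⟨j1, j2, hj1, hj2, hne⟩ :=
    (Set.one_lt_ncard_iff (Set.toFinite _)).1 ((by omega : 1 < Ncount n z t))
  have hj1t : gap n z j1 ≤ t := hj1
  have hj2t : gap n z j2 ≤ t := hj2
  have hZpos : 0 < Zfun n z β := Zfun_pos hn0 β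
  have hZexp : Real.exp (L - β*t) ≤ Zfun n z β := by
    have hNpos : (0:ℝ) < (Ncount n z t : ℝ) := by exact_mod_cast (by omega : 0 < Ncount n z t)
    have h1 : Real.exp (L - β*t) = (Ncount n z t : ℝ) * Real.exp (-(β*t)) := by
      rw [hLdef, Real.exp_sub, Real.exp_log hNpos, Real.exp_neg, div_eq_mul_inv]
    rw [h1]
    exact Zfun_ge_count hβ.le ht.le
  have hsup : sSup (Set.range (softmaxP n z β)) ≤ 1 / Zfun n z β := by
    apply csSup_le (Set.range_nonempty _)
    rintro x ⟨j, rfl⟩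
    rw [softmax_eq]
    gcongr
    have hg := gap_nonneg (z := z) j
    have h0 : -(β * gap n z j) ≤ 0 := by nlinarith
    calc Real.exp (-(β * gap n z j)) ≤ Real.exp 0 := Real.exp_le_exp.2 h0
      _ = 1 := Real.exp_zero
  have hsec : Real.exp (-(β*t)) / Zfun n z β ≤ secondLargest n (softmaxP n z β) := by
    apply le_csInf (Set.range_nonempty _)
    rintro b ⟨i, rfl⟩
    obtain ⟨j, hjne, hjt⟩ : ∃ j, j ≠ i ∧ gap n z j ≤ t := by
      by_cases h : j1 = i
      · exact ⟨j2, by rw [← h]; exact hne.symm, hj2t⟩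
      · exact ⟨j1, h, hj1t⟩
    have h1 : Real.exp (-(β*t)) / Zfun n z β ≤ softmaxP n z β j := by
      rw [softmax_eq]
      gcongr
    refine h1.trans ?_
    apply le_csSup ((Set.toFinite _).image _).bddAbove
    exact ⟨j, hjne, rfl⟩
  have hD1 : Dgap n z β ≤ (1 - Real.exp (-(β*t))) * (1 / Zfun n z β) := by
    rw [Dgap]
    have : (1 - Real.exp (-(β*t))) * (1 / Zfun n z β)
        = 1 / Zfun n z β - Real.exp (-(β*t)) / Zfun n z β := by ring
    rw [this]
    exact sub_le_sub hsup hsec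
  have h1 : 1 - Real.exp (-(β*t)) ≤ β*t := by
    have := Real.add_one_le_exp (-(β*t)); linarith
  have h2 : 1 / Zfun n z β ≤ Real.exp (β*t - L) := by
    rw [div_le_iff₀ hZpos]
    calc (1:ℝ) = Real.exp (β*t - L) * Real.exp (L - β*t) := by rw [← Real.exp_add]; simp
      _ ≤ Real.exp (β*t - L) * Zfun n z β := by
          exact mul_le_mul_of_nonneg_left hZexp (Real.exp_pos _).le
  have hβt : β*t ≤ 2*(β/Λ)*L := by
    have hpos : (0:ℝ) < 2*β/Λ := by positivity
    have := mul_le_mul_of_nonneg_left hL.le hpos.le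
    have heq : 2*β/Λ * (Λ/2*t) = β*t := by field_simp
    rw [heq] at this
    calc β*t ≤ 2*β/Λ * L := this
      _ = 2*(β/Λ)*L := by ring
  have hhalf : β*t ≤ L/2 := by
    refine hβt.trans ?_
    nlinarith
  have h2' : Real.exp (β*t - L) ≤ Real.exp (-(L/2)) :=
    Real.exp_le_exp.2 (by linarith)
  have hfin : (1 - Real.exp (-(β*t))) * (1 / Zfun n z β) ≤ (β*t) * Real.exp (-(L/2)) := by
    apply mul_le_mul h1 (h2.trans h2') (by positivity) (by positivity)
  have hfin2 : (β*t) * Real.exp (-(L/2)) ≤ (2*(β/Λ)*L) * Real.exp (-(L/2)) :=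
    mul_le_mul_of_nonneg_right hβt (Real.exp_pos _).le
  have hfin3 : (2*(β/Λ)*L) * Real.exp (-(L/2)) ≤ 2*(β/Λ) := by
    have haux := aux_xexp hLpos.le
    have hrpos : (0:ℝ) ≤ 2*(β/Λ) := by positivity
    calc (2*(β/Λ)*L) * Real.exp (-(L/2)) = (2*(β/Λ)) * (L * Real.exp (-(L/2))) := by ring
      _ ≤ (2*(β/Λ)) * 1 := mul_le_mul_of_nonneg_left haux hrpos
      _ = 2*(β/Λ) := mul_one _
  linarith
end dgap


section main
variable {Λ β : ℕ → ℝ} {ξΛ ξβ : ℝ}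

lemma log_ge_one : ∀ᶠ n : ℕ in atTop, 1 ≤ Real.log n := by
  filter_upwards [eventually_ge_atTop 3] with n hn
  have h3 : (3:ℝ) ≤ (n:ℝ) := by exact_mod_cast hn
  have : Real.exp 1 < 3 := by
    have := Real.exp_one_lt_d9
    linarith
  have h1 : (1:ℝ) ≤ Real.log 3 := (Real.le_log_iff_exp_le (by norm_num)).2 this.le
  exact h1.trans (Real.log_le_log (by norm_num) h3)

lemma tendsto_log_nat : Tendsto (fun n : ℕ => Real.log n) atTop atTop :=
  Real.tendsto_log_atTop.comp tendsto_natCast_atTop_atTop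

/-- ratio upper bound when ξβ < ξΛ -/
lemma ratio_tendsto_zero (hβ : ∀ n, 0 < β n)
    (hΛa : IsLogAsymp Λ ξΛ) (hβa : IsLogAsymp β ξβ)
    (hΛpos : ∀ᶠ n in atTop, 0 < Λ n) (hlt : ξβ < ξΛ) :
    Tendsto (fun n => β n / Λ n) atTop (nhds 0) := by
  obtain ⟨c1, c2, hc1, hc12, hev⟩ := hΛa
  obtain ⟨d1, d2, hd1, hd12, hevβ⟩ := hβa
  have hbound : ∀ᶠ n in atTop, β n / Λ n ≤ (d2/c1) * Real.log n ^ (ξβ - ξΛ) := by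
    filter_upwards [hev, hevβ, log_ge_one, hΛpos] with n h1 h2 hlog hΛp
    have hlogpos : (0:ℝ) < Real.log n := by linarith
    have hd2pos : (0:ℝ) < d2 := lt_of_lt_of_le hd1 hd12
    have hrp : (0:ℝ) < Real.log n ^ ξΛ := Real.rpow_pos_of_pos hlogpos _
    have key : β n / Λ n ≤ (d2 * Real.log n ^ ξβ) / (c1 * Real.log n ^ ξΛ) := by
      apply div_le_div₀ (by positivity) h2.2 (by positivity) h1.1
    refine key.trans (le_of_eq ?_)
    rw [Real.rpow_sub hlogpos]
    field_simp
  have hnonneg : ∀ᶠ n in atTop, 0 ≤ β n / Λ n := by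
    filter_upwards [hΛpos] with n hΛp
    exact le_of_lt (div_pos (hβ n) hΛp)
  have htend : Tendsto (fun n : ℕ => (d2/c1) * Real.log n ^ (ξβ - ξΛ)) atTop (nhds 0) := by
    have h1 : Tendsto (fun x : ℝ => x ^ (-(ξΛ - ξβ))) atTop (nhds 0) :=
      tendsto_rpow_neg_atTop (by linarith)
    have h2 : Tendsto (fun n : ℕ => Real.log n ^ (ξβ - ξΛ)) atTop (nhds 0) := by
      have := h1.comp tendsto_log_nat
      simpa [Function.comp_def, neg_sub] using this
    simpa using h2.const_mul (d2/c1)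
  exact squeeze_zero' hnonneg hbound htend

/-- ratio tends to infinity when ξΛ < ξβ -/
lemma ratio_tendsto_atTop (hβ : ∀ n, 0 < β n)
    (hΛa : IsLogAsymp Λ ξΛ) (hβa : IsLogAsymp β ξβ)
    (hΛpos : ∀ᶠ n in atTop, 0 < Λ n) (hlt : ξΛ < ξβ) :
    Tendsto (fun n => β n / Λ n) atTop atTop := by
  obtain ⟨c1, c2, hc1, hc12, hev⟩ := hΛa
  obtain ⟨d1, d2, hd1, hd12, hevβ⟩ := hβa
  have hc2pos : (0:ℝ) < c2 := lt_of_lt_of_le hc1 hc12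
  have hbound : ∀ᶠ n : ℕ in atTop, (d1/c2) * Real.log n ^ (ξβ - ξΛ) ≤ β n / Λ n := by
    filter_upwards [hev, hevβ, log_ge_one, hΛpos] with n h1 h2 hlog hΛp
    have hlogpos : (0:ℝ) < Real.log n := by linarith
    have hrp : (0:ℝ) < Real.log n ^ ξΛ := Real.rpow_pos_of_pos hlogpos _
    have key : (d1 * Real.log n ^ ξβ) / (c2 * Real.log n ^ ξΛ) ≤ β n / Λ n := by
      apply div_le_div₀ (le_of_lt (hβ n)) h2.1 hΛp h1.2
    refine le_trans (le_of_eq ?_) key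
    rw [Real.rpow_sub hlogpos]
    field_simp
  have htend : Tendsto (fun n : ℕ => (d1/c2) * Real.log n ^ (ξβ - ξΛ)) atTop atTop := by
    have h1 : Tendsto (fun x : ℝ => x ^ (ξβ - ξΛ)) atTop atTop :=
      tendsto_rpow_atTop (by linarith)
    have h2 : Tendsto (fun n : ℕ => Real.log n ^ (ξβ - ξΛ)) atTop atTop :=
      h1.comp tendsto_log_nat
    exact h2.const_mul_atTop (by positivity)
  exact tendsto_atTop_mono' _ hbound htend

lemma two_rpow_tendsto_zero {f : ℕ → ℝ} (hf : Tendsto f atTop atTop) :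
    Tendsto (fun n => (2:ℝ) ^ (2 - f n)) atTop (nhds 0) := by
  have heq : (fun n => (2:ℝ) ^ (2 - f n)) = fun n => Real.exp (Real.log 2 * (2 - f n)) := by
    funext n
    rw [Real.rpow_def_of_pos (by norm_num)]
  rw [heq]
  apply Real.tendsto_exp_atBot.comp
  have h1 : Tendsto (fun n => f n - 2) atTop atTop := tendsto_atTop_add_const_right _ _ hf
  have h2 : Tendsto (fun n => 2 - f n) atTop atBot := by
    have h3 := tendsto_neg_atTop_atBot.comp h1
    have heq2 : (fun n => 2 - f n) = (fun n => -(f n - 2)) := by funext n; ring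
    rw [heq2]
    exact h3
  exact h2.const_mul_atBot (Real.log_pos (by norm_num))
end main


theorem stmt11 (z : (n : ℕ) → Fin n → ℝ) (Λ β : ℕ → ℝ) (ξΛ ξβ : ℝ)
    (hβ : ∀ n, 0 < β n)
    (hΛ : ∀ᶠ n in atTop, IsLUB (lamSet n (z n)) (Λ n))
    (hΛa : IsLogAsymp Λ ξΛ) (hβa : IsLogAsymp β ξβ) :
    (ξβ < ξΛ → Tendsto (fun n => Dgap n (z n) (β n)) atTop (nhds 0)) ∧
    (ξΛ < ξβ → Tendsto (fun n => entropyH n (z n) (β n)) atTop (nhds 0)) ∧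
    (¬ Tendsto (fun n => Dgap n (z n) (β n)) atTop (nhds 0) →
      ¬ Tendsto (fun n => entropyH n (z n) (β n)) atTop (nhds 0) → ξβ = ξΛ) := by
  have hΛpos : ∀ᶠ n : ℕ in atTop, 0 < Λ n := by
    obtain ⟨c1, c2, hc1, hc12, hev⟩ := hΛa
    filter_upwards [hev, log_ge_one] with n h1 hlog
    have hlogpos : (0:ℝ) < Real.log n := by linarith
    have : (0:ℝ) < c1 * Real.log n ^ ξΛ := by positivity
    linarith [h1.1]
  have part1 : ξβ < ξΛ → Tendsto (fun n => Dgap n (z n) (β n)) atTop (nhds 0) := by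
    intro hlt
    have hr := ratio_tendsto_zero hβ hΛa hβa hΛpos hlt
    have hsmall : ∀ᶠ n : ℕ in atTop, β n / Λ n ≤ 1/4 := by
      have := hr.eventually_lt_const (by norm_num : (0:ℝ) < 1/4)
      exact this.mono fun n hn => hn.le
    have hub : ∀ᶠ n : ℕ in atTop, Dgap n (z n) (β n) ≤ 2 * (β n / Λ n) := by
      filter_upwards [hΛ, hΛpos, hsmall, eventually_ge_atTop 2] with n h1 h2 h3 h4
      exact Dgap_le_main h4 (hβ n) h2 h1 h3
    have hlb : ∀ᶠ n : ℕ in atTop, 0 ≤ Dgap n (z n) (β n) := by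
      filter_upwards [eventually_ge_atTop 2] with n h4
      exact Dgap_nonneg h4
    have h2r : Tendsto (fun n => 2 * (β n / Λ n)) atTop (nhds 0) := by
      simpa using hr.const_mul 2
    exact squeeze_zero' hlb hub h2r
  have part2 : ξΛ < ξβ → Tendsto (fun n => entropyH n (z n) (β n)) atTop (nhds 0) := by
    intro hlt
    have hr := ratio_tendsto_atTop hβ hΛa hβa hΛpos hlt
    have hrhalf : Tendsto (fun n => β n / Λ n / 2) atTop atTop :=
      hr.atTop_div_const (by norm_num)
    have hb1 := two_rpow_tendsto_zero hrhalf
    have hb2 := two_rpow_tendsto_zero hr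
    have hbt : Tendsto
        (fun n => (2:ℝ) ^ (2 - β n / Λ n / 2) + (2:ℝ) ^ (2 - β n / Λ n)) atTop (nhds 0) := by
      simpa using hb1.add hb2
    have hub : ∀ᶠ n : ℕ in atTop, entropyH n (z n) (β n)
        ≤ (2:ℝ) ^ (2 - β n / Λ n / 2) + (2:ℝ) ^ (2 - β n / Λ n) := by
      filter_upwards [hΛ, hΛpos, hr.eventually_ge_atTop 4, eventually_ge_atTop 2]
        with n h1 h2 h3 h4
      have hb := entropy_le (by omega : 0 < n) (hβ n) h2 h1 h3
      have heq : (β n / 2) / Λ n = β n / Λ n / 2 := by ring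
      rw [heq] at hb
      exact hb
    have hlb : ∀ᶠ n : ℕ in atTop, 0 ≤ entropyH n (z n) (β n) :=
      Eventually.of_forall (fun n => entropy_nonneg)
    exact squeeze_zero' hlb hub hbt
  refine ⟨part1, part2, ?_⟩
  intro hD hH
  rcases lt_trichotomy ξβ ξΛ with h | h | h
  · exact absurd (part1 h) hD
  · exact h
  · exact absurd (part2 h) hH
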